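/- Given continuous functions f : ℝ → ℂ and ε : ℝ → (0,∞), there exists an entire function F : ℂ → ℂ such that |F(x) - f(x)| < ε(x) for all x ∈ ℝ. -/

import Mathlib

open MeasureTheory Filter Set Topology

set_option maxHeartbeats 1000000

noncomputable section

namespace CarlemanProof

/-- Gaussian kernel with scale `s`. -/
def gk (s : ℝ) (w : ℂ) : ℂ := Complex.exp (-(s : ℂ) ^ 2 * w ^ 2)

lemma norm_gk (s : ℝ) (w : ℂ) :
    ‖gk s w‖ = Real.exp (-(s ^ 2) * (w.re ^ 2 - w.im ^ 2)) := by
  rw [gk, Complex.norm_exp]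
  congr 1
  simp [Complex.mul_re, Complex.mul_im, pow_two]

lemma gk_ofReal (s u : ℝ) : gk s (u : ℂ) = ((Real.exp (-(s ^ 2) * u ^ 2) : ℝ) : ℂ) := by
  rw [gk, Complex.ofReal_exp]
  congr 1
  push_cast
  ring

lemma continuous_gk (s : ℝ) : Continuous (gk s) :=
  Complex.continuous_exp.comp (by continuity)

/-- smoothed function: convolution with the Gaussian kernel. -/
def gc (a : ℝ → ℂ) (s : ℝ) (z : ℂ) : ℂ :=
  ((s / Real.sqrt Real.pi : ℝ) : ℂ) * ∫ y : ℝ, a y * gk s (z - y)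

section basic

variable {a : ℝ → ℂ} {K : ℝ} (ha : Continuous a) (hK : 0 ≤ K)
  (hsupp : ∀ x : ℝ, K ≤ |x| → a x = 0)

omit ha in
include hsupp in
lemma hcs : HasCompactSupport a := by
  refine HasCompactSupport.intro (isCompact_Icc (a := -K) (b := K)) fun x hx => ?_
  apply hsupp
  by_contra h
  push_neg at h
  rcases abs_lt.mp h with ⟨h1, h2⟩
  exact hx ⟨h1.le, h2.le⟩

include ha hsupp in
lemma integrable_a : Integrable a := ha.integrable_of_hasCompactSupport (hcs hsupp)

include ha hsupp in
lemma integrable_kernel (s : ℝ) (z : ℂ) :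
    Integrable fun y : ℝ => a y * gk s (z - (y : ℂ)) := by
  apply Continuous.integrable_of_hasCompactSupport
  · exact ha.mul ((continuous_gk s).comp (continuous_const.sub Complex.continuous_ofReal))
  · exact HasCompactSupport.mul_right (hcs hsupp)

include ha hK hsupp in
lemma differentiable_gc (s : ℝ) : Differentiable ℂ (gc a s) := by
  intro z₀
  apply DifferentiableAt.const_mul
  have hkc : ∀ z : ℂ, Continuous fun y : ℝ => gk s (z - (y : ℂ)) := fun z =>
    (continuous_gk s).comp (continuous_const.sub Complex.continuous_ofReal)
  have hkc' : Continuous fun y : ℝ => gk s (z₀ - (y : ℂ)) * (-(s : ℂ) ^ 2 * (2 * (z₀ - y))) :=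
    (hkc z₀).mul (continuous_const.mul (continuous_const.mul
      (continuous_const.sub Complex.continuous_ofReal)))
  have key := hasDerivAt_integral_of_dominated_loc_of_deriv_le (μ := volume) (x₀ := z₀)
    (F := fun (z : ℂ) (y : ℝ) => a y * gk s (z - y))
    (F' := fun (z : ℂ) (y : ℝ) => a y * (gk s (z - y) * (-(s : ℂ) ^ 2 * (2 * (z - y)))))
    (bound := fun y =>
      ‖a y‖ * (2 * s ^ 2 * (‖z₀‖ + 1 + K) * Real.exp (s ^ 2 * (‖z₀‖ + 1) ^ 2)))
    (s := Metric.ball z₀ 1) (Metric.ball_mem_nhds z₀ one_pos)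
    (Eventually.of_forall fun z => ((ha.mul (hkc z)).aestronglyMeasurable))
    (integrable_kernel ha hsupp s z₀)
    ((ha.mul hkc').aestronglyMeasurable)
    ?_ ((integrable_a ha hsupp).norm.mul_const _) ?_
  · exact key.2.differentiableAt
  · refine Eventually.of_forall fun y => fun z hz => ?_
    have hCnn : (0:ℝ) ≤ 2 * s ^ 2 * (‖z₀‖ + 1 + K) * Real.exp (s ^ 2 * (‖z₀‖ + 1) ^ 2) := by
      positivity
    by_cases hy : K ≤ |y|
    · simp only [hsupp y hy, norm_zero, zero_mul, norm_mul]
      positivity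
    · push_neg at hy
      rw [norm_mul]
      apply mul_le_mul_of_nonneg_left _ (norm_nonneg _)
      rw [norm_mul]
      have hz1 : ‖z - z₀‖ ≤ 1 := le_of_lt (by simpa [Metric.mem_ball, dist_eq_norm] using hz)
      have hexp : ‖gk s (z - (y:ℂ))‖ ≤ Real.exp (s ^ 2 * (‖z₀‖ + 1) ^ 2) := by
        rw [norm_gk]
        apply Real.exp_le_exp.2
        have h1 : (z - (y : ℂ)).im = z.im := by simp
        have h2 : |z.im - z₀.im| ≤ ‖z - z₀‖ := by
          simpa using Complex.abs_im_le_norm (z - z₀)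
        have h3 : |z₀.im| ≤ ‖z₀‖ := by
          simpa using Complex.abs_im_le_norm z₀
        have h4 : |z.im| ≤ ‖z₀‖ + 1 := by
          calc |z.im| ≤ |z.im - z₀.im| + |z₀.im| := by
                simpa using abs_add_le (z.im - z₀.im) z₀.im
            _ ≤ ‖z₀‖ + 1 := by linarith
        have h5 : (z - (y : ℂ)).im ^ 2 ≤ (‖z₀‖ + 1) ^ 2 := by
          rw [h1, ← sq_abs z.im]
          apply pow_le_pow_left₀ (abs_nonneg _) h4
        nlinarith [sq_nonneg ((z - (y : ℂ)).re), sq_nonneg s]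
      have hlin : ‖-(s : ℂ) ^ 2 * (2 * (z - (y:ℂ)))‖ ≤ s ^ 2 * (2 * (‖z₀‖ + 1 + K)) := by
        rw [norm_mul, norm_mul]
        have h1 : ‖(-(s:ℂ) ^ 2)‖ = s ^ 2 := by
          rw [norm_neg, norm_pow, Complex.norm_real, Real.norm_eq_abs, sq_abs]
        have h2 : ‖(2 : ℂ)‖ = 2 := by norm_num
        rw [h1, h2]
        have h3 : ‖z - (y:ℂ)‖ ≤ ‖z₀‖ + 1 + K := by
          calc ‖z - (y:ℂ)‖ ≤ ‖z - z₀‖ + ‖z₀ - (y:ℂ)‖ := norm_sub_le_norm_sub_add_norm_sub _ _ _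
            _ ≤ 1 + (‖z₀‖ + ‖(y:ℂ)‖) := by
                gcongr
                exact norm_sub_le _ _
            _ ≤ ‖z₀‖ + 1 + K := by
                have : ‖(y:ℂ)‖ = |y| := by simp [Complex.norm_real]
                rw [this]; linarith
        gcongr
      calc ‖gk s (z - (y:ℂ))‖ * ‖-(s : ℂ) ^ 2 * (2 * (z - (y:ℂ)))‖
          ≤ Real.exp (s ^ 2 * (‖z₀‖ + 1) ^ 2) * (s ^ 2 * (2 * (‖z₀‖ + 1 + K))) := by
            apply mul_le_mul hexp hlin (norm_nonneg _) (Real.exp_nonneg _)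
        _ = 2 * s ^ 2 * (‖z₀‖ + 1 + K) * Real.exp (s ^ 2 * (‖z₀‖ + 1) ^ 2) := by ring
  · refine Eventually.of_forall fun y => fun z _ => ?_
    apply HasDerivAt.const_mul
    have h1 : HasDerivAt (fun z : ℂ => z - (y:ℂ)) 1 z := (hasDerivAt_id z).sub_const _
    have h2 : HasDerivAt (fun z : ℂ => -(s:ℂ)^2 * (z - (y:ℂ))^2)
        (-(s:ℂ)^2 * (2 * (z - (y:ℂ)) ^ 1 * 1)) z := (h1.pow 2).const_mul _
    have h3 := h2.cexp
    have h4 : gk s (z - (y:ℂ)) * (-(s:ℂ)^2 * (2 * (z - (y:ℂ)))) =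
        Complex.exp (-(s:ℂ)^2 * (z - (y:ℂ))^2) * (-(s:ℂ)^2 * (2 * (z - (y:ℂ)) ^ 1 * 1)) := by
      rw [gk]; ring
    rw [h4]
    exact h3

end basic

lemma gauss_mass (s : ℝ) (hs : 0 < s) (x : ℝ) :
    ∫ y : ℝ, Real.exp (-(s ^ 2) * (x - y) ^ 2) = Real.sqrt Real.pi / s := by
  have h1 : ∫ y : ℝ, Real.exp (-(s ^ 2) * (x - y) ^ 2)
      = ∫ y : ℝ, Real.exp (-(s ^ 2) * y ^ 2) :=
    integral_sub_left_eq_self (fun u => Real.exp (-(s ^ 2) * u ^ 2)) volume x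
  rw [h1, integral_gaussian, Real.sqrt_div Real.pi_pos.le, Real.sqrt_sq hs.le]

lemma gauss_mass2 (s : ℝ) (hs : 0 < s) (x : ℝ) :
    ∫ y : ℝ, Real.exp (-(s ^ 2 / 2) * (x - y) ^ 2) = Real.sqrt 2 * Real.sqrt Real.pi / s := by
  have h1 : ∫ y : ℝ, Real.exp (-(s ^ 2 / 2) * (x - y) ^ 2)
      = ∫ y : ℝ, Real.exp (-(s ^ 2 / 2) * y ^ 2) :=
    integral_sub_left_eq_self (fun u => Real.exp (-(s ^ 2 / 2) * u ^ 2)) volume x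
  have h2 : Real.pi / (s ^ 2 / 2) = 2 * Real.pi / s ^ 2 := by
    field_simp
  rw [h1, integral_gaussian, h2, Real.sqrt_div (by positivity), Real.sqrt_sq hs.le,
    Real.sqrt_mul (by norm_num)]

lemma integrable_gk_real (s : ℝ) (hs : 0 < s) (x : ℝ) :
    Integrable fun y : ℝ => gk s ((x : ℂ) - y) := by
  have h0 : (fun y : ℝ => gk s ((x : ℂ) - y))
      = fun y : ℝ => ((Real.exp (-(s ^ 2) * (x - y) ^ 2) : ℝ) : ℂ) := by
    funext y
    have h : ((x : ℂ) - (y : ℂ)) = (((x - y : ℝ)) : ℂ) := by push_cast; ring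
    rw [h, gk_ofReal]
  rw [h0]
  exact (((integrable_exp_neg_mul_sq (by positivity : (0:ℝ) < s ^ 2)).comp_sub_left x)).ofReal

lemma gc_mass (s : ℝ) (hs : 0 < s) (x : ℝ) :
    ((s / Real.sqrt Real.pi : ℝ) : ℂ) * ∫ y : ℝ, gk s ((x : ℂ) - y) = 1 := by
  have h0 : (fun y : ℝ => gk s ((x : ℂ) - y))
      = fun y : ℝ => ((Real.exp (-(s ^ 2) * (x - y) ^ 2) : ℝ) : ℂ) := by
    funext y
    have h : ((x : ℂ) - (y : ℂ)) = (((x - y : ℝ)) : ℂ) := by push_cast; ring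
    rw [h, gk_ofReal]
  rw [h0]
  rw [show (∫ y : ℝ, ((Real.exp (-(s ^ 2) * (x - y) ^ 2) : ℝ) : ℂ))
      = ((∫ y : ℝ, Real.exp (-(s ^ 2) * (x - y) ^ 2) : ℝ) : ℂ) from integral_ofReal]
  rw [gauss_mass s hs x, ← Complex.ofReal_mul]
  rw [show s / Real.sqrt Real.pi * (Real.sqrt Real.pi / s) = 1 by
    field_simp]
  norm_num

lemma norm_gk_real (s x y : ℝ) :
    ‖gk s ((x : ℂ) - y)‖ = Real.exp (-(s ^ 2) * (x - y) ^ 2) := by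
  have h : ((x : ℂ) - (y : ℂ)) = (((x - y : ℝ)) : ℂ) := by push_cast; ring
  rw [h, gk_ofReal, Complex.norm_real, Real.norm_eq_abs, abs_of_pos (Real.exp_pos _)]

section approx

variable {a : ℝ → ℂ} {K : ℝ}

lemma gc_approx (ha : Continuous a) (hK : 0 ≤ K)
    (hsupp : ∀ x : ℝ, K ≤ |x| → a x = 0) (δ : ℝ) (hδ : 0 < δ) :
    ∀ᶠ s in atTop, ∀ x : ℝ, ‖gc a s x - a x‖ ≤ δ := by
  -- bound for a
  obtain ⟨M₀, hM₀⟩ := (isCompact_Icc (a := -K) (b := K)).exists_bound_of_continuousOn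
    ha.continuousOn
  obtain ⟨M, hM0, hM⟩ : ∃ M : ℝ, 0 ≤ M ∧ ∀ x : ℝ, ‖a x‖ ≤ M := by
    refine ⟨max M₀ 0, le_max_right _ _, fun x => ?_⟩
    by_cases h : K ≤ |x|
    · simp [hsupp x h]
    · push_neg at h
      rcases abs_lt.mp h with ⟨h1, h2⟩
      exact le_trans (hM₀ x ⟨h1.le, h2.le⟩) (le_max_left _ _)
  -- modulus of continuity
  obtain ⟨η, hη, hmod⟩ := Metric.uniformContinuous_iff.mp
    ((hcs hsupp).uniformContinuous_of_continuous ha) (δ / 2) (half_pos hδ)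
  -- tail smallness
  have htend : Tendsto (fun s : ℝ => 2 * M * Real.sqrt 2 * Real.exp (-(s ^ 2) * (η ^ 2 / 2)))
      atTop (𝓝 0) := by
    have h1 : Tendsto (fun s : ℝ => -(s ^ 2) * (η ^ 2 / 2)) atTop atBot := by
      apply Tendsto.atBot_mul_const (by positivity : (0:ℝ) < η ^ 2 / 2)
      exact tendsto_neg_atBot_iff.mpr (tendsto_pow_atTop (two_ne_zero))
    have h2 := Real.tendsto_exp_atBot.comp h1
    have h3 := h2.const_mul (2 * M * Real.sqrt 2)
    simpa using h3
  filter_upwards [eventually_gt_atTop 0,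
    htend.eventually_le_const (half_pos hδ)] with s hs htail
  intro x
  have hs2 : (0:ℝ) < s ^ 2 := by positivity
  have hint1 : Integrable fun y : ℝ => a y * gk s ((x:ℂ) - y) := integrable_kernel ha hsupp s x
  have hint2 : Integrable fun y : ℝ => a x * gk s ((x:ℂ) - y) :=
    (integrable_gk_real s hs x).const_mul _
  have hid : gc a s x - a x
      = ((s / Real.sqrt Real.pi : ℝ) : ℂ) * ∫ y : ℝ, (a y - a x) * gk s ((x:ℂ) - y) := by
    have h2 : ∫ y : ℝ, (a y - a x) * gk s ((x:ℂ) - y)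
        = (∫ y : ℝ, a y * gk s ((x:ℂ) - y)) - ∫ y : ℝ, a x * gk s ((x:ℂ) - y) := by
      rw [← integral_sub hint1 hint2]
      congr 1; funext y; ring
    have h3 := gc_mass s hs x
    have h4 : ((s / Real.sqrt Real.pi : ℝ) : ℂ) * ∫ y : ℝ, a x * gk s ((x:ℂ) - y) = a x := by
      calc ((s / Real.sqrt Real.pi : ℝ) : ℂ) * ∫ y : ℝ, a x * gk s ((x:ℂ) - y)
          = a x * (((s / Real.sqrt Real.pi : ℝ) : ℂ) * ∫ y : ℝ, gk s ((x:ℂ) - y)) := by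
            rw [integral_const_mul]; ring
        _ = a x := by rw [h3, mul_one]
    rw [h2, mul_sub, h4, gc]
  rw [hid, norm_mul]
  have hnc : ‖((s / Real.sqrt Real.pi : ℝ) : ℂ)‖ = s / Real.sqrt Real.pi := by
    rw [Complex.norm_real, Real.norm_eq_abs,
      abs_of_pos (div_pos hs (Real.sqrt_pos.2 Real.pi_pos))]
  set T : ℝ := 2 * M * Real.exp (-(s ^ 2) * (η ^ 2 / 2)) with hT
  have hTnn : 0 ≤ T := by
    rw [hT]; positivity
  have hbint1 : Integrable fun y : ℝ => Real.exp (-(s ^ 2) * (x - y) ^ 2) :=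
    (integrable_exp_neg_mul_sq hs2).comp_sub_left x
  have hbint2 : Integrable fun y : ℝ => Real.exp (-(s ^ 2 / 2) * (x - y) ^ 2) :=
    (integrable_exp_neg_mul_sq (by positivity)).comp_sub_left x
  have hbint : Integrable fun y : ℝ =>
      δ / 2 * Real.exp (-(s ^ 2) * (x - y) ^ 2) + T * Real.exp (-(s ^ 2 / 2) * (x - y) ^ 2) :=
    (hbint1.const_mul _).add (hbint2.const_mul _)
  have hptw : ∀ y : ℝ, ‖(a y - a x) * gk s ((x:ℂ) - y)‖
      ≤ δ / 2 * Real.exp (-(s ^ 2) * (x - y) ^ 2) + T * Real.exp (-(s ^ 2 / 2) * (x - y) ^ 2) := by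
    intro y
    rw [norm_mul, norm_gk_real]
    by_cases hnear : dist y x < η
    · have h1 : ‖a y - a x‖ ≤ δ / 2 := by
        rw [← dist_eq_norm]
        exact (hmod hnear).le
      have h2 : ‖a y - a x‖ * Real.exp (-(s ^ 2) * (x - y) ^ 2)
          ≤ δ / 2 * Real.exp (-(s ^ 2) * (x - y) ^ 2) := by
        apply mul_le_mul_of_nonneg_right h1 (Real.exp_nonneg _)
      have h3 : (0:ℝ) ≤ T * Real.exp (-(s ^ 2 / 2) * (x - y) ^ 2) :=
        mul_nonneg hTnn (Real.exp_nonneg _)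
      linarith
    · push_neg at hnear
      have hdist : η ≤ |y - x| := by rwa [Real.dist_eq] at hnear
      have hsq : η ^ 2 ≤ (x - y) ^ 2 := by
        have := abs_nonneg (y - x)
        nlinarith [sq_abs (y - x)]
      have h1 : ‖a y - a x‖ ≤ 2 * M := by
        calc ‖a y - a x‖ ≤ ‖a y‖ + ‖a x‖ := norm_sub_le _ _
          _ ≤ 2 * M := by have := hM y; have := hM x; linarith
      have h2 : Real.exp (-(s ^ 2) * (x - y) ^ 2)
          ≤ Real.exp (-(s ^ 2) * (η ^ 2 / 2)) * Real.exp (-(s ^ 2 / 2) * (x - y) ^ 2) := by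
        rw [← Real.exp_add]
        apply Real.exp_le_exp.2
        nlinarith [sq_nonneg s]
      have h3 : ‖a y - a x‖ * Real.exp (-(s ^ 2) * (x - y) ^ 2)
          ≤ T * Real.exp (-(s ^ 2 / 2) * (x - y) ^ 2) := by
        calc ‖a y - a x‖ * Real.exp (-(s ^ 2) * (x - y) ^ 2)
            ≤ 2 * M * (Real.exp (-(s ^ 2) * (η ^ 2 / 2)) * Real.exp (-(s ^ 2 / 2) * (x - y) ^ 2)) :=
              mul_le_mul h1 h2 (Real.exp_nonneg _) (by linarith)
          _ = T * Real.exp (-(s ^ 2 / 2) * (x - y) ^ 2) := by rw [hT]; ring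
      have h4 : (0:ℝ) ≤ δ / 2 * Real.exp (-(s ^ 2) * (x - y) ^ 2) := by positivity
      linarith
  have hnorm := norm_integral_le_of_norm_le hbint (Eventually.of_forall hptw)
  have hib : ∫ y : ℝ, (δ / 2 * Real.exp (-(s ^ 2) * (x - y) ^ 2)
      + T * Real.exp (-(s ^ 2 / 2) * (x - y) ^ 2))
      = δ / 2 * (Real.sqrt Real.pi / s) + T * (Real.sqrt 2 * Real.sqrt Real.pi / s) := by
    rw [integral_add (hbint1.const_mul _) (hbint2.const_mul _),
      integral_const_mul, integral_const_mul, gauss_mass s hs x, gauss_mass2 s hs x]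
  rw [hnc]
  calc s / Real.sqrt Real.pi * ‖∫ y : ℝ, (a y - a x) * gk s ((x:ℂ) - y)‖
      ≤ s / Real.sqrt Real.pi
        * (δ / 2 * (Real.sqrt Real.pi / s) + T * (Real.sqrt 2 * Real.sqrt Real.pi / s)) := by
        apply mul_le_mul_of_nonneg_left _ (by positivity)
        rw [← hib]
        exact hnorm
    _ = δ / 2 + 2 * M * Real.sqrt 2 * Real.exp (-(s ^ 2) * (η ^ 2 / 2)) := by
        rw [hT]
        have hπ : Real.sqrt Real.pi ≠ 0 := ne_of_gt (Real.sqrt_pos.2 Real.pi_pos)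
        field_simp
    _ ≤ δ / 2 + δ / 2 := by linarith
    _ = δ := by ring

end approx

section small

variable {a : ℝ → ℂ} {K : ℝ}

lemma gc_small (ha : Continuous a) (hsupp : ∀ x : ℝ, K ≤ |x| → a x = 0)
    (c r : ℝ) (hr : 0 ≤ r) (hrc : r ≤ c) (hgap : r ^ 2 < (c - r) ^ 2)
    (hin : ∀ x : ℝ, |x| ≤ c → a x = 0) (η : ℝ) (hη : 0 < η) :
    ∀ᶠ s in atTop, ∀ z : ℂ, ‖z‖ ≤ r → ‖gc a s z‖ ≤ η := by
  set γ : ℝ := (c - r) ^ 2 - r ^ 2 with hγdef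
  have hγpos : 0 < γ := by rw [hγdef]; linarith
  set I : ℝ := ∫ y : ℝ, ‖a y‖ with hIdef
  have hInn : 0 ≤ I := integral_nonneg fun y => norm_nonneg _
  have h0 : Tendsto (fun t : ℝ => t * Real.exp (-t)) atTop (𝓝 0) := by
    simpa using Real.tendsto_pow_mul_exp_neg_atTop_nhds_zero 1
  have h1 : Tendsto (fun s : ℝ => γ * s) atTop atTop :=
    Tendsto.const_mul_atTop hγpos tendsto_id
  have h2 : Tendsto (fun s : ℝ => s * Real.exp (-(γ * s))) atTop (𝓝 0) := by
    have h3 := (h0.comp h1).const_mul γ⁻¹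
    simp only [mul_zero] at h3
    convert h3 using 2 with s
    field_simp
    simp only [Function.comp_apply]; rw [mul_comm γ s]
  have htend : Tendsto (fun s : ℝ => I / Real.sqrt Real.pi * (s * Real.exp (-(s ^ 2) * γ)))
      atTop (𝓝 0) := by
    have hsq : Tendsto (fun s : ℝ => I / Real.sqrt Real.pi * (s * Real.exp (-(γ * s))))
        atTop (𝓝 0) := by
      simpa using h2.const_mul (I / Real.sqrt Real.pi)
    apply squeeze_zero' ?_ ?_ hsq
    · filter_upwards [eventually_ge_atTop (0:ℝ)] with s hs
      have : 0 ≤ I / Real.sqrt Real.pi := by positivity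
      positivity
    · filter_upwards [eventually_ge_atTop (1:ℝ)] with s hs
      have he : Real.exp (-(s ^ 2) * γ) ≤ Real.exp (-(γ * s)) := by
        apply Real.exp_le_exp.2
        nlinarith [mul_nonneg (mul_nonneg hγpos.le (by linarith : (0:ℝ) ≤ s))
          (by linarith : (0:ℝ) ≤ s - 1)]
      have hIπ : 0 ≤ I / Real.sqrt Real.pi := by positivity
      have hs0 : (0:ℝ) ≤ s := by linarith
      apply mul_le_mul_of_nonneg_left _ hIπ
      exact mul_le_mul_of_nonneg_left he hs0
  filter_upwards [eventually_ge_atTop (1:ℝ), htend.eventually_le_const hη] with s hs1 htail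
  intro z hz
  have hs : (0:ℝ) < s := by linarith
  have hb : ∀ y : ℝ, ‖a y * gk s (z - y)‖ ≤ ‖a y‖ * Real.exp (-(s ^ 2) * γ) := by
    intro y
    by_cases hy : |y| ≤ c
    · simp [hin y hy]
    · push_neg at hy
      rw [norm_mul, norm_gk]
      apply mul_le_mul_of_nonneg_left _ (norm_nonneg _)
      apply Real.exp_le_exp.2
      have hre : |z.re| ≤ r := by
        calc |z.re| ≤ ‖z‖ := Complex.abs_re_le_norm z
          _ ≤ r := hz
      have him : |z.im| ≤ r := by
        calc |z.im| ≤ ‖z‖ := Complex.abs_im_le_norm z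
          _ ≤ r := hz
      have h4 : c - r ≤ |(z - (y:ℂ)).re| := by
        have h5 : (z - (y:ℂ)).re = z.re - y := by simp
        rw [h5]
        calc c - r ≤ |y| - |z.re| := by linarith
          _ ≤ |y - z.re| := abs_sub_abs_le_abs_sub y z.re
          _ = |z.re - y| := abs_sub_comm y z.re
      have h6 : (c - r) ^ 2 ≤ (z - (y:ℂ)).re ^ 2 := by
        rw [← sq_abs ((z - (y:ℂ)).re)]
        apply pow_le_pow_left₀ (by linarith) h4
      have h7 : (z - (y:ℂ)).im ^ 2 ≤ r ^ 2 := by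
        have h8 : (z - (y:ℂ)).im = z.im := by simp
        rw [h8, ← sq_abs z.im]
        apply pow_le_pow_left₀ (abs_nonneg _) him
      have h9 : γ ≤ (z - (y:ℂ)).re ^ 2 - (z - (y:ℂ)).im ^ 2 := by
        rw [hγdef]; linarith
      nlinarith [sq_nonneg s]
  have hnorm : ‖∫ y : ℝ, a y * gk s (z - y)‖ ≤ I * Real.exp (-(s ^ 2) * γ) := by
    have h10 := norm_integral_le_of_norm_le
      (((integrable_a ha hsupp).norm).mul_const (Real.exp (-(s ^ 2) * γ)))
      (Eventually.of_forall hb)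
    calc ‖∫ y : ℝ, a y * gk s (z - y)‖
        ≤ ∫ y : ℝ, ‖a y‖ * Real.exp (-(s ^ 2) * γ) := h10
      _ = I * Real.exp (-(s ^ 2) * γ) := by
          rw [hIdef, ← integral_mul_const]
  calc ‖gc a s z‖ = ‖((s / Real.sqrt Real.pi : ℝ) : ℂ)‖ * ‖∫ y : ℝ, a y * gk s (z - y)‖ := by
        rw [gc, norm_mul]
    _ ≤ s / Real.sqrt Real.pi * (I * Real.exp (-(s ^ 2) * γ)) := by
        rw [Complex.norm_real, Real.norm_eq_abs,
          abs_of_pos (div_pos hs (Real.sqrt_pos.2 Real.pi_pos))]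
        exact mul_le_mul_of_nonneg_left hnorm (by positivity)
    _ = I / Real.sqrt Real.pi * (s * Real.exp (-(s ^ 2) * γ)) := by ring
    _ ≤ η := htail

end small

section scheme

/-- clamp to [0,1] -/
def clamp (t : ℝ) : ℝ := max 0 (min 1 t)

lemma clamp_nonneg (t : ℝ) : 0 ≤ clamp t := le_max_left _ _

lemma clamp_le_one (t : ℝ) : clamp t ≤ 1 := max_le zero_le_one (min_le_left _ _)

lemma clamp_of_nonpos {t : ℝ} (h : t ≤ 0) : clamp t = 0 :=
  max_eq_left (le_trans (min_le_right _ _) h)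

lemma clamp_of_one_le {t : ℝ} (h : 1 ≤ t) : clamp t = 1 := by
  rw [clamp, min_eq_left h]
  exact max_eq_right zero_le_one

lemma continuous_clamp : Continuous clamp :=
  continuous_const.max (continuous_const.min continuous_id)

/-- inner cutoff -/
def theta (k : ℕ) (x : ℝ) : ℝ := clamp ((k : ℝ) - 1 - |x|)

/-- outer cutoff -/
def psi (k : ℕ) (x : ℝ) : ℝ := clamp ((k : ℝ) + 1 - |x|)

lemma continuous_theta (k : ℕ) : Continuous (theta k) :=
  continuous_clamp.comp ((continuous_const).sub continuous_abs)

lemma continuous_psi (k : ℕ) : Continuous (psi k) :=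
  continuous_clamp.comp ((continuous_const).sub continuous_abs)

/-- the local correction target -/
def aa (f : ℝ → ℂ) (S : ℂ → ℂ) (k : ℕ) (x : ℝ) : ℂ :=
  ((psi k x * (1 - theta k x) : ℝ) : ℂ) * (f x - S x)

lemma aa_cont {f : ℝ → ℂ} {S : ℂ → ℂ} (hf : Continuous f) (hS : Differentiable ℂ S)
    (k : ℕ) : Continuous (aa f S k) := by
  apply Continuous.mul
  · exact Complex.continuous_ofReal.comp
      ((continuous_psi k).mul (continuous_const.sub (continuous_theta k)))
  · exact hf.sub (hS.continuous.comp Complex.continuous_ofReal)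

lemma aa_supp (f : ℝ → ℂ) (S : ℂ → ℂ) (k : ℕ) :
    ∀ x : ℝ, (k : ℝ) + 1 ≤ |x| → aa f S k x = 0 := by
  intro x hx
  have h : psi k x = 0 := clamp_of_nonpos (by linarith)
  simp [aa, h]

lemma aa_inner (f : ℝ → ℂ) (S : ℂ → ℂ) (k : ℕ) :
    ∀ x : ℝ, |x| ≤ (k : ℝ) - 2 → aa f S k x = 0 := by
  intro x hx
  have h : theta k x = 1 := clamp_of_one_le (by linarith)
  simp [aa, h]

/-- minimum of ε on [-k,k] -/
def elow (ε : ℝ → ℝ) (k : ℕ) : ℝ := sInf (ε '' Icc (-(k : ℝ)) k)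

lemma elow_pos {ε : ℝ → ℝ} (hε : Continuous ε) (hεpos : ∀ x, 0 < ε x) (k : ℕ) :
    0 < elow ε k := by
  have hne : (Icc (-(k : ℝ)) k).Nonempty := ⟨0, by simp⟩
  obtain ⟨x₀, hx₀, hmin⟩ := isCompact_Icc.exists_isMinOn hne hε.continuousOn
  have h1 : ε x₀ ≤ elow ε k := by
    apply le_csInf (hne.image ε)
    rintro b ⟨y, hy, rfl⟩
    exact hmin hy
  exact lt_of_lt_of_le (hεpos x₀) h1

lemma elow_le {ε : ℝ → ℝ} (hεpos : ∀ x, 0 < ε x) {k : ℕ} {x : ℝ} (hx : |x| ≤ (k : ℝ)) :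
    elow ε k ≤ ε x := by
  apply csInf_le
  · exact ⟨0, by rintro b ⟨y, _, rfl⟩; exact (hεpos y).le⟩
  · rcases abs_le.mp hx with ⟨h1, h2⟩
    exact mem_image_of_mem ε ⟨h1, h2⟩

/-- target accuracies -/
def delta (ε : ℝ → ℝ) (k : ℕ) : ℝ := (2 : ℝ)⁻¹ ^ k * min 1 (elow ε k) / 4

lemma delta_pos {ε : ℝ → ℝ} (hε : Continuous ε) (hεpos : ∀ x, 0 < ε x) (k : ℕ) :
    0 < delta ε k := by
  have := elow_pos hε hεpos k
  have h2 : (0:ℝ) < min 1 (elow ε k) := lt_min one_pos this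
  have h3 : (0:ℝ) < (2:ℝ)⁻¹ ^ k := by positivity
  rw [delta]
  positivity

lemma delta_le {ε : ℝ → ℝ} (hεpos : ∀ x, 0 < ε x) {k : ℕ} {x : ℝ} (hx : |x| ≤ (k : ℝ)) :
    delta ε k ≤ (2 : ℝ)⁻¹ ^ k * ε x / 4 := by
  rw [delta]
  have h1 : min 1 (elow ε k) ≤ ε x := le_trans (min_le_right _ _) (elow_le hεpos hx)
  have h3 : (0:ℝ) ≤ (2:ℝ)⁻¹ ^ k := by positivity
  have := mul_le_mul_of_nonneg_left h1 h3
  linarith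

/-- One correction step:
entire `h` close to `aa f S k` on `ℝ` and (for `k ≥ 5`) small on the disk of radius `k/4`. -/
lemma exists_step (f : ℝ → ℂ) (ε : ℝ → ℝ) (S : ℂ → ℂ) (k : ℕ) :
    ∃ h : ℂ → ℂ, Differentiable ℂ h ∧
      ((Continuous f ∧ Continuous ε ∧ (∀ x, 0 < ε x) ∧ Differentiable ℂ S) →
        (∀ x : ℝ, ‖h (x : ℂ) - aa f S k x‖ ≤ delta ε k) ∧
        (5 ≤ k → ∀ z : ℂ, ‖z‖ ≤ (k : ℝ) / 4 → ‖h z‖ ≤ (2 : ℝ)⁻¹ ^ k)) := by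
  by_cases H : Continuous f ∧ Continuous ε ∧ (∀ x, 0 < ε x) ∧ Differentiable ℂ S
  · obtain ⟨hf, hε, hεpos, hS⟩ := H
    have ha : Continuous (aa f S k) := aa_cont hf hS k
    have hKnn : (0:ℝ) ≤ (k : ℝ) + 1 := by positivity
    have hsupp := aa_supp f S k
    have hδ := delta_pos hε hεpos k
    by_cases h5 : 5 ≤ k
    · have hk5 : (5 : ℝ) ≤ (k : ℝ) := by exact_mod_cast h5
      have hev := (gc_approx ha hKnn hsupp (delta ε k) hδ).and
        (gc_small ha hsupp ((k : ℝ) - 2) ((k : ℝ) / 4) (by positivity)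
          (by linarith) (by nlinarith) (aa_inner f S k) ((2 : ℝ)⁻¹ ^ k) (by positivity))
      obtain ⟨s, hs1, hs2⟩ := hev.exists
      exact ⟨gc (aa f S k) s, differentiable_gc ha hKnn hsupp s,
        fun _ => ⟨hs1, fun _ => hs2⟩⟩
    · obtain ⟨s, hs1⟩ := (gc_approx ha hKnn hsupp (delta ε k) hδ).exists
      exact ⟨gc (aa f S k) s, differentiable_gc ha hKnn hsupp s,
        fun _ => ⟨hs1, fun h5' => absurd h5' h5⟩⟩
  · exact ⟨0, differentiable_const 0, fun hH => absurd hH H⟩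

/-- partial sums of the approximating series -/
def SS (f : ℝ → ℂ) (ε : ℝ → ℝ) : ℕ → (ℂ → ℂ)
  | 0 => fun _ => 0
  | k + 1 => fun z => SS f ε k z + (exists_step f ε (SS f ε k) (k + 1)).choose z

/-- the terms of the approximating series -/
def hh (f : ℝ → ℂ) (ε : ℝ → ℝ) (k : ℕ) : ℂ → ℂ :=
  (exists_step f ε (SS f ε k) (k + 1)).choose

variable {f : ℝ → ℂ} {ε : ℝ → ℝ}

lemma SS_succ_apply (k : ℕ) (z : ℂ) : SS f ε (k + 1) z = SS f ε k z + hh f ε k z := rfl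

lemma hh_diff (k : ℕ) : Differentiable ℂ (hh f ε k) :=
  (exists_step f ε (SS f ε k) (k + 1)).choose_spec.1

lemma SS_diff : ∀ k, Differentiable ℂ (SS f ε k)
  | 0 => differentiable_const 0
  | k + 1 => fun z => ((SS_diff k z).add (hh_diff (f := f) (ε := ε) k z))

lemma hh_spec (hf : Continuous f) (hε : Continuous ε) (hεpos : ∀ x, 0 < ε x) (k : ℕ) :
    (∀ x : ℝ, ‖hh f ε k (x : ℂ) - aa f (SS f ε k) (k + 1) x‖ ≤ delta ε (k + 1)) ∧
      (5 ≤ k + 1 → ∀ z : ℂ, ‖z‖ ≤ ((k : ℝ) + 1) / 4 → ‖hh f ε k z‖ ≤ (2 : ℝ)⁻¹ ^ (k + 1)) := by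
  have h := (exists_step f ε (SS f ε k) (k + 1)).choose_spec.2
    ⟨hf, hε, hεpos, SS_diff k⟩
  refine ⟨h.1, fun h5 z hz => h.2 h5 z ?_⟩
  convert hz using 2
  push_cast
  ring

lemma SS_eq_sum (n : ℕ) (z : ℂ) :
    SS f ε n z = ∑ j ∈ Finset.range n, hh f ε j z := by
  induction n with
  | zero => simp [SS]
  | succ k ih => rw [SS_succ_apply, ih, Finset.sum_range_succ]

/-- uniform bounds on balls, summable -/
lemma bound_on_ball (hf : Continuous f) (hε : Continuous ε) (hεpos : ∀ x, 0 < ε x) (R : ℝ) :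
    ∃ u : ℕ → ℝ, Summable u ∧
      ∀ k, ∀ z ∈ Metric.ball (0 : ℂ) R, ‖hh f ε k z‖ ≤ u k := by
  set N : ℕ := max 4 ⌈4 * R⌉₊ with hN
  have hex : ∀ k : ℕ, ∃ C : ℝ, ∀ z ∈ Metric.closedBall (0 : ℂ) R, ‖hh f ε k z‖ ≤ C :=
    fun k => (isCompact_closedBall (0:ℂ) R).exists_bound_of_continuousOn
      (hh_diff k).continuous.continuousOn
  choose C hC using hex
  refine ⟨fun k => if k < N then C k else (2 : ℝ)⁻¹ ^ (k + 1), ?_, ?_⟩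
  · rw [← summable_nat_add_iff N]
    have : (fun k => if k + N < N then C (k + N) else (2 : ℝ)⁻¹ ^ (k + N + 1))
        = fun k => (2 : ℝ)⁻¹ ^ (N + 1) * (2 : ℝ)⁻¹ ^ k := by
      funext k
      rw [if_neg (by omega)]
      rw [← pow_add]
      congr 1
      omega
    rw [this]
    exact (summable_geometric_of_lt_one (by norm_num) (by norm_num)).mul_left _
  · intro k z hz
    dsimp only
    by_cases hk : k < N
    · rw [if_pos hk]
      exact hC k z (Metric.ball_subset_closedBall hz)
    · rw [if_neg hk]
      push_neg at hk
      have h5 : 5 ≤ k + 1 := by omega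
      have hball : ‖z‖ ≤ ((k : ℝ) + 1) / 4 := by
        have h1 : ‖z‖ < R := by simpa [Metric.mem_ball, dist_eq_norm] using hz
        have h2 : 4 * R ≤ (N : ℝ) := by
          calc 4 * R ≤ (⌈4 * R⌉₊ : ℝ) := Nat.le_ceil _
            _ ≤ (N : ℝ) := by exact_mod_cast Nat.le_max_right _ _
        have h3 : (N : ℝ) ≤ (k : ℝ) := by exact_mod_cast hk
        linarith
      exact (hh_spec hf hε hεpos k).2 h5 z hball

lemma F_diff (hf : Continuous f) (hε : Continuous ε) (hεpos : ∀ x, 0 < ε x) :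
    Differentiable ℂ (fun z : ℂ => ∑' k, hh f ε k z) := by
  intro z₀
  obtain ⟨u, hu, hub⟩ := bound_on_ball (f := f) (ε := ε) hf hε hεpos (‖z₀‖ + 1)
  have hd := Complex.differentiableOn_tsum_of_summable_norm hu
    (fun k => (hh_diff k).differentiableOn) Metric.isOpen_ball hub
  have hz₀ : z₀ ∈ Metric.ball (0 : ℂ) (‖z₀‖ + 1) := by
    simp only [Metric.mem_ball, dist_eq_norm, sub_zero]
    linarith
  exact hd.differentiableAt (Metric.isOpen_ball.mem_nhds hz₀)

lemma err_rec (hf : Continuous f) (hε : Continuous ε) (hεpos : ∀ x, 0 < ε x)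
    (x : ℝ) (n : ℕ) (hx : |x| ≤ (n : ℝ) + 1) :
    ‖f x - SS f ε (n + 1) (x : ℂ)‖
      ≤ theta (n + 1) x * ‖f x - SS f ε n (x : ℂ)‖ + delta ε (n + 1) := by
  have hspec := (hh_spec hf hε hεpos n).1 x
  have hpsi : psi (n + 1) x = 1 := clamp_of_one_le (by push_cast; linarith)
  have hid : f x - SS f ε (n + 1) (x : ℂ)
      = ((theta (n + 1) x : ℝ) : ℂ) * (f x - SS f ε n (x : ℂ))
        - (hh f ε n (x : ℂ) - aa f (SS f ε n) (n + 1) x) := by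
    rw [SS_succ_apply]
    simp only [aa, hpsi]
    push_cast
    ring
  rw [hid]
  calc ‖((theta (n + 1) x : ℝ) : ℂ) * (f x - SS f ε n (x : ℂ))
        - (hh f ε n (x : ℂ) - aa f (SS f ε n) (n + 1) x)‖
      ≤ ‖((theta (n + 1) x : ℝ) : ℂ) * (f x - SS f ε n (x : ℂ))‖
        + ‖hh f ε n (x : ℂ) - aa f (SS f ε n) (n + 1) x‖ := norm_sub_le _ _
    _ ≤ theta (n + 1) x * ‖f x - SS f ε n (x : ℂ)‖ + delta ε (n + 1) := by
        have habs : |theta (n + 1) x| = theta (n + 1) x :=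
          abs_of_nonneg (clamp_nonneg _)
        rw [norm_mul, Complex.norm_real, Real.norm_eq_abs, habs]
        exact add_le_add le_rfl hspec

end scheme

end CarlemanProof

open CarlemanProof

/-- Carleman's theorem: continuous functions on `ℝ` can be approximated in the fine
topology by restrictions of entire functions. -/
theorem carleman (f : ℝ → ℂ) (hf : Continuous f) (ε : ℝ → ℝ) (hε : Continuous ε)
    (hεpos : ∀ x : ℝ, 0 < ε x) :
    ∃ F : ℂ → ℂ, Differentiable ℂ F ∧ ∀ x : ℝ, ‖F x - f x‖ < ε x := by
  classical
  refine ⟨fun z => ∑' k, hh f ε k z, F_diff hf hε hεpos, ?_⟩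
  intro x
  obtain ⟨u, hu, hub⟩ := bound_on_ball (f := f) (ε := ε) hf hε hεpos (|x| + 1)
  have hxball : (x : ℂ) ∈ Metric.ball (0 : ℂ) (|x| + 1) := by
    simp only [Metric.mem_ball, dist_eq_norm, sub_zero, Complex.norm_real, Real.norm_eq_abs]
    linarith
  have hsumm : Summable fun k => hh f ε k (x : ℂ) :=
    Summable.of_norm_bounded hu fun k => hub k _ hxball
  have htend0 : Tendsto (fun n => ∑ j ∈ Finset.range n, hh f ε j (x : ℂ)) atTop
      (𝓝 (∑' k, hh f ε k (x : ℂ))) := hsumm.hasSum.tendsto_sum_nat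
  have htendS : Tendsto (fun n => SS f ε n (x : ℂ)) atTop (𝓝 (∑' k, hh f ε k (x : ℂ))) := by
    simp only [SS_eq_sum]
    exact htend0
  have htendE : Tendsto (fun n => ‖f x - SS f ε n (x : ℂ)‖) atTop
      (𝓝 ‖f x - ∑' k, hh f ε k (x : ℂ)‖) := (tendsto_const_nhds.sub htendS).norm
  set k₀ : ℕ := Nat.floor |x| + 1 with hk₀def
  have hxk₀ : |x| < (k₀ : ℝ) := by
    rw [hk₀def]
    push_cast
    exact Nat.lt_floor_add_one _
  have hbase : ‖f x - SS f ε k₀ (x : ℂ)‖ ≤ delta ε k₀ := by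
    have hxle : |x| ≤ (Nat.floor |x| : ℝ) + 1 := by
      rw [hk₀def] at hxk₀
      push_cast at hxk₀
      linarith
    have hrec := err_rec hf hε hεpos x (Nat.floor |x|) hxle
    have hθ : theta (Nat.floor |x| + 1) x = 0 := by
      apply clamp_of_nonpos
      push_cast
      have := Nat.floor_le (abs_nonneg x)
      linarith
    rw [hθ] at hrec
    simpa using hrec
  have hstep : ∀ n, k₀ ≤ n → ‖f x - SS f ε n (x : ℂ)‖ ≤ ∑ j ∈ Finset.Icc k₀ n, delta ε j := by
    intro n hn
    induction n, hn using Nat.le_induction with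
    | base => simpa using hbase
    | succ n hn ih =>
      have hx' : |x| ≤ (n : ℝ) + 1 := by
        have h1 : (k₀ : ℝ) ≤ (n : ℝ) := by exact_mod_cast hn
        linarith
      have hrec := err_rec hf hε hεpos x n hx'
      have hθ1 : theta (n + 1) x ≤ 1 := clamp_le_one _
      have hθ0 : 0 ≤ theta (n + 1) x := clamp_nonneg _
      have h2 : theta (n + 1) x * ‖f x - SS f ε n (x : ℂ)‖ ≤ ‖f x - SS f ε n (x : ℂ)‖ := by
        nlinarith [norm_nonneg (f x - SS f ε n (x : ℂ))]
      rw [Finset.sum_Icc_succ_top (by omega : k₀ ≤ n + 1)]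
      have h3 := h2.trans ih
      linarith
  have hsum_le : ∀ n, (∑ j ∈ Finset.Icc k₀ n, delta ε j) ≤ ε x / 2 := by
    intro n
    have h1 : ∀ j ∈ Finset.Icc k₀ n, delta ε j ≤ ε x / 4 * (2 : ℝ)⁻¹ ^ j := by
      intro j hj
      have hk : k₀ ≤ j := (Finset.mem_Icc.mp hj).1
      have hxj : |x| ≤ (j : ℝ) := le_trans hxk₀.le (by exact_mod_cast hk)
      have := delta_le hεpos hxj
      linarith
    have hs : Summable fun j : ℕ => (2 : ℝ)⁻¹ ^ j :=
      summable_geometric_of_lt_one (by norm_num) (by norm_num)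
    have hts : ∑' j : ℕ, (2 : ℝ)⁻¹ ^ j = 2 := by
      rw [tsum_geometric_of_lt_one (by norm_num) (by norm_num)]
      norm_num
    have h4 : (∑ j ∈ Finset.Icc k₀ n, (2 : ℝ)⁻¹ ^ j) ≤ 2 := by
      have := Summable.sum_le_tsum (Finset.Icc k₀ n) (fun j _ => by positivity) hs
      linarith
    calc (∑ j ∈ Finset.Icc k₀ n, delta ε j)
        ≤ ∑ j ∈ Finset.Icc k₀ n, ε x / 4 * (2 : ℝ)⁻¹ ^ j := Finset.sum_le_sum h1
      _ = ε x / 4 * ∑ j ∈ Finset.Icc k₀ n, (2 : ℝ)⁻¹ ^ j := by rw [Finset.mul_sum]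
      _ ≤ ε x / 4 * 2 := by
          apply mul_le_mul_of_nonneg_left h4 (by linarith [hεpos x])
      _ = ε x / 2 := by ring
  have hfinal : ‖f x - ∑' k, hh f ε k (x : ℂ)‖ ≤ ε x / 2 := by
    apply le_of_tendsto htendE
    filter_upwards [eventually_ge_atTop k₀] with n hn
    exact le_trans (hstep n hn) (hsum_le n)
  rw [norm_sub_rev]
  calc ‖f x - ∑' k, hh f ε k (x : ℂ)‖ ≤ ε x / 2 := hfinal
    _ < ε x := by linarith [hεpos x]
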